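/- The Thue–Morse sequence contains no cube: there is no nonempty finite binary word X and index j such that XXX occurs as a factor of the Thue–Morse sequence starting at position j. -/

import Mathlib

open Fin.NatCast in
/-- The Thue–Morse sequence. -/
def t (i : ℕ) : Fin 2 := ((Nat.digits 2 i).count 1 : Fin 2)

/-- The word `X` occurs in the Thue–Morse sequence at position `j`. -/
def OccursAt (X : List (Fin 2)) (j : ℕ) : Prop :=
  ∀ m, m < X.length → X.getD m 0 = t (j + m)


lemma t_even (k : ℕ) : t (2*k) = t k := by
  rcases Nat.eq_zero_or_pos k with h | h
  · simp [h]
  · unfold t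
    rw [Nat.digits_def' (by norm_num : 1 < 2) (by omega)]
    simp [Nat.mul_div_cancel_left _ (by norm_num : 0 < 2), Nat.mul_mod_right]

lemma t_odd (k : ℕ) : t (2*k+1) = t k + 1 := by
  unfold t
  rw [Nat.digits_def' (by norm_num : 1 < 2) (by omega)]
  have h1 : (2*k+1) % 2 = 1 := by omega
  have h2 : (2*k+1) / 2 = k := by omega
  rw [h1, h2]
  simp [List.count_cons]
  apply Fin.ext; simp [Fin.val_add, Fin.val_natCast]

lemma fin2_ne : ∀ x : Fin 2, x ≠ x + 1 := by decide

lemma t_ne (k : ℕ) : t (2*k) ≠ t (2*k+1) := by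
  rw [t_even, t_odd]; exact fin2_ne _

lemma t_ne_succ (k : ℕ) : Even k → t k ≠ t (k+1) := by
  rintro ⟨a, rfl⟩
  have : a + a = 2*a := by ring
  rw [this]
  exact t_ne a

lemma no_overlap : ∀ n, 0 < n → ∀ j, ¬ (∀ i, i ≤ n → t (j+i) = t (j+n+i)) := by
  intro n
  induction n using Nat.strong_induction_on with
  | _ n IH =>
  intro hn j H
  rcases Nat.even_or_odd n with ⟨m, hm⟩ | ⟨h, hh⟩
  · -- n = 2m
    have hm2 : n = 2*m := by omega
    have hm0 : 0 < m := by omega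
    rcases Nat.even_or_odd j with ⟨a, ha⟩ | ⟨a, ha⟩
    · have ha2 : j = 2*a := by omega
      apply IH m (by omega) hm0 a
      intro i hi
      have := H (2*i) (by omega)
      have e1 : j + 2*i = 2*(a+i) := by omega
      have e2 : j + n + 2*i = 2*(a+m+i) := by omega
      rwa [e1, e2, t_even, t_even] at this
    · have ha2 : j = 2*a+1 := by omega
      apply IH m (by omega) hm0 a
      intro i hi
      rcases Nat.eq_zero_or_pos i with h0 | h0
      · subst h0
        have := H 0 (by omega)
        have e1 : j + 0 = 2*a+1 := by omega
        have e2 : j + n + 0 = 2*(a+m)+1 := by omega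
        rw [e1, e2, t_odd, t_odd] at this
        simpa using this
      · have := H (2*i-1) (by omega)
        have e1 : j + (2*i-1) = 2*(a+i) := by omega
        have e2 : j + n + (2*i-1) = 2*(a+m+i) := by omega
        rwa [e1, e2, t_even, t_even] at this
  · -- n = 2h+1
    rcases Nat.eq_zero_or_pos h with h0 | h0
    · -- n = 1 : t j = t (j+1) = t (j+2)
      have h1 := H 0 (by omega)
      have h2 := H 1 (by omega)
      simp only [hh, h0] at h1 h2
      rcases Nat.even_or_odd j with he | ho
      · exact t_ne_succ j he (by simpa using h1)
      · refine t_ne_succ (j+1) ?_ ?_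
        · rcases ho with ⟨a, ha⟩; exact ⟨a+1, by omega⟩
        · have e1 : j + 1 + 0 = j + 1 := by omega
          have e2 : j + 1 + 1 = j + 2 := by omega
          rw [e1] at h2
          convert h2 using 2
          omega
    · -- n = 2h+1, h ≥ 1
      obtain ⟨k, hk1, hk2⟩ : ∃ k, j ≤ 2*k ∧ 2*k ≤ j+1 := ⟨(j+1)/2, by omega⟩
      -- relations at any k' with j ≤ 2k' and 2k'+2 ≤ j+n
      have rel : ∀ k', j ≤ 2*k' → 2*k'+2 ≤ j+n →
          t (k'+1) = t k' ∧ t (k'+h) = t k' + 1 := by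
        intro k' hA hB
        have r1 := H (2*k'-j) (by omega)
        have e1 : j + (2*k'-j) = 2*k' := by omega
        have e2 : j + n + (2*k'-j) = 2*(k'+h)+1 := by omega
        rw [e1, e2, t_odd] at r1
        have r2 := H (2*k'+1-j) (by omega)
        have e3 : j + (2*k'+1-j) = 2*k'+1 := by omega
        have e4 : j + n + (2*k'+1-j) = 2*(k'+h+1) := by omega
        rw [e3, e4, t_odd, t_even] at r2
        have r3 := H (2*k'+2-j) (by omega)
        have e5 : j + (2*k'+2-j) = 2*(k'+1) := by omega
        have e6 : j + n + (2*k'+2-j) = 2*(k'+h+1)+1 := by omega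
        rw [e5, e6, t_even, t_odd] at r3
        rw [t_even] at r1
        -- r1 : t k' = t (k'+h) + 1
        -- r2 : t k' + 1 = t (k'+h+1)
        -- r3 : t (k'+1) = t (k'+h+1) + 1
        constructor
        · rw [r3, ← r2]
          have : ∀ x : Fin 2, x + 1 + 1 = x := by decide
          exact this _
        · rw [r1]
          have : ∀ x : Fin 2, x + 1 + 1 = x := by decide
          exact (this _).symm
      rcases Nat.lt_or_ge h 2 with hle | hge
      · -- h = 1, n = 3
        have h1 : h = 1 := by omega
        obtain ⟨c1, c2⟩ := rel k hk1 (by omega)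
        rw [h1] at c2
        rw [c1] at c2
        exact fin2_ne _ c2
      · -- h ≥ 2, n ≥ 5
        obtain ⟨c1, _⟩ := rel k hk1 (by omega)
        obtain ⟨c1', _⟩ := rel (k+1) (by omega) (by omega)
        -- t(k+2)=t(k+1)=t(k)
        rcases Nat.even_or_odd k with he | ho
        · exact t_ne_succ k he c1.symm
        · have : Even (k+1) := by rcases ho with ⟨a, ha⟩; exact ⟨a+1, by omega⟩
          refine t_ne_succ (k+1) this ?_
          have e : k + 1 + 1 = k + 2 := by omega
          rw [e]
          exact c1'.symm


theorem thue_morse_cubefree :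
    ¬ ∃ (X : List (Fin 2)) (j : ℕ), X ≠ [] ∧ OccursAt (X ++ X ++ X) j := by
  rintro ⟨X, j, hX, H⟩
  set n := X.length with hn
  have hn0 : 0 < n := List.length_pos_iff.mpr hX
  have hlen : (X ++ X ++ X).length = 3*n := by simp [hn]; ring
  have hget : ∀ i, i < n → ∀ c, c ≤ 2 → (X ++ X ++ X).getD (c*n + i) 0 = X.getD i 0 := by
    intro i hi c hc
    interval_cases c
    · simp only [List.append_assoc]
      rw [List.getD_append _ _ _ _ (by omega)]
      congr 1; omega
    · simp only [List.append_assoc]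
      rw [List.getD_append_right _ _ _ _ (by omega)]
      rw [List.getD_append _ _ _ _ (by omega)]
      congr 1; omega
    · rw [List.getD_append_right _ _ _ _ (by simp [hn]; omega)]
      simp only [List.length_append]
      congr 1; omega
  have hper : ∀ i, i ≤ n → t (j + i) = t (j + n + i) := by
    intro i hi
    rcases Nat.lt_or_ge i n with h | h
    · have h1 := H i (by omega)
      have h2 := H (n + i) (by omega)
      rw [show n + i = 1*n + i by ring] at h2
      rw [hget i h 1 (by omega)] at h2
      rw [show (i : ℕ) = 0*n + i by ring, hget i h 0 (by omega)] at h1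
      have := h1.symm.trans h2
      convert this using 2 <;> omega
    · have hi' : i = n := by omega
      subst hi'
      have h1 := H n (by omega)
      have h2 := H (2*n) (by omega)
      rw [show (n:ℕ) = 1*n + 0 by ring, hget 0 hn0 1 (by omega)] at h1
      rw [show 2*n = 2*n + 0 by ring, hget 0 hn0 2 (by omega)] at h2
      have := h1.symm.trans h2
      convert this using 2 <;> omega
  exact no_overlap n hn0 j hper
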